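/- Let α ∈ (0,1) be irrational and m, n, k positive integers with k ≥ 1. If the factors of the Sturmian word s_{α,0} starting at positions n, n+m, n+2m, …, n+km, each of length m, all have the same Parikh vector, then the k+1 points {nα}, {(n+m)α}, …, {(n+km)α} all lie on the same side of {-mα}: either all in [0, {-mα}) or all in [{-mα}, 1). -/

import Mathlib

open scoped Classical

/-- The Parikh vector (number of `a`'s, number of `b`'s) of the length-`m` factor of the
Sturmian word `s_{α,0}` starting at position `n`, where the letter at position `p ≥ 1` is
`a` iff `{pα} ≥ {-α} = 1 - α`. -/
noncomputable def sturmParikh (α : ℝ) (n m : ℕ) : ℕ × ℕ :=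
  (((Finset.range m).filter fun i => 1 - α ≤ Int.fract (((n + i : ℕ) : ℝ) * α)).card,
   ((Finset.range m).filter fun i => Int.fract (((n + i : ℕ) : ℝ) * α) < 1 - α).card)

private lemma floor_add_alpha_aux (α : ℝ) (h0 : 0 < α) (h1 : α < 1) (x : ℝ) :
    ⌊x + α⌋ - ⌊x⌋ = if 1 - α ≤ Int.fract x then 1 else 0 := by
  have hx : x + α = (⌊x⌋ : ℝ) + (Int.fract x + α) := by
    have := Int.fract_add_floor x; linarith
  rw [hx, Int.floor_intCast_add]
  have hf0 := Int.fract_nonneg x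
  have hf1 := Int.fract_lt_one x
  by_cases hc : 1 - α ≤ Int.fract x
  · have : ⌊Int.fract x + α⌋ = 1 := by
      rw [Int.floor_eq_iff]
      push_cast
      constructor <;> linarith
    rw [this, if_pos hc]; ring
  · have : ⌊Int.fract x + α⌋ = 0 := by
      rw [Int.floor_eq_iff]
      push_cast
      constructor <;> linarith
    rw [this, if_neg hc]; ring

/-- The number of `a`'s in the length-`m` window at `p` is `⌊(p+m)α⌋ - ⌊pα⌋`. -/
private lemma count_a_eq (α : ℝ) (h0 : 0 < α) (h1 : α < 1) (p m : ℕ) :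
    ((((Finset.range m).filter fun i => 1 - α ≤ Int.fract (((p + i : ℕ) : ℝ) * α)).card : ℤ))
      = ⌊((p + m : ℕ) : ℝ) * α⌋ - ⌊((p : ℕ) : ℝ) * α⌋ := by
  rw [Finset.card_filter]
  push_cast
  rw [show (∑ i ∈ Finset.range m,
        if 1 - α ≤ Int.fract (((p:ℝ) + (i:ℝ)) * α) then (1:ℤ) else 0)
      = ∑ i ∈ Finset.range m,
        (⌊((p:ℝ) + (i:ℝ)) * α + α⌋ - ⌊((p:ℝ) + (i:ℝ)) * α⌋) from
    Finset.sum_congr rfl fun i _ => (floor_add_alpha_aux α h0 h1 _).symm]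
  have key : ∀ i : ℕ, ((p:ℝ) + (i:ℝ)) * α + α = ((p:ℝ) + (((i+1 : ℕ)):ℝ)) * α := by
    intro i; push_cast; ring
  rw [Finset.sum_congr rfl fun i _ => by rw [key i]]
  rw [Finset.sum_range_sub (fun i => ⌊((p:ℝ) + (i:ℝ)) * α⌋) m]
  norm_num

/-- If the length-`m` factors of `s_{α,0}` starting at positions
`n, n+m, …, n+km` all have the same Parikh vector, then the points
`{nα}, {(n+m)α}, …, {(n+km)α}` all lie on the same side of `{-mα}`. -/
theorem abelian_power_points_same_side
    (α : ℝ) (hα : α ∈ Set.Ioo (0 : ℝ) 1) (hirr : Irrational α)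
    (m n k : ℕ) (hm : 0 < m) (hn : 0 < n) (hk : 1 ≤ k)
    (h : ∀ j ≤ k, sturmParikh α (n + j * m) m = sturmParikh α n m) :
    (∀ j ≤ k, Int.fract (((n + j * m : ℕ) : ℝ) * α) < Int.fract (-(m : ℝ) * α)) ∨
    (∀ j ≤ k, Int.fract (-(m : ℝ) * α) ≤ Int.fract (((n + j * m : ℕ) : ℝ) * α)) := by
  obtain ⟨h0, h1⟩ := hα
  -- the floors are arithmetic with common difference c
  have hstep : ∀ j ≤ k,
      ⌊((n + (j + 1) * m : ℕ) : ℝ) * α⌋ - ⌊((n + j * m : ℕ) : ℝ) * α⌋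
        = ⌊((n + m : ℕ) : ℝ) * α⌋ - ⌊((n : ℕ) : ℝ) * α⌋ := by
    intro j hj
    have hP := congrArg Prod.fst (h j hj)
    simp only [sturmParikh] at hP
    have e1 := count_a_eq α h0 h1 (n + j * m) m
    have e2 := count_a_eq α h0 h1 n m
    rw [hP, e2] at e1
    have hee : n + j * m + m = n + (j + 1) * m := by ring
    rw [hee] at e1
    exact e1.symm
  set c : ℤ := ⌊((n + m : ℕ) : ℝ) * α⌋ - ⌊((n : ℕ) : ℝ) * α⌋ with hc
  set β : ℝ := (m : ℝ) * α - (c : ℝ) with hβ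
  -- the fractional parts are arithmetic with common difference β
  have hxstep : ∀ j ≤ k,
      Int.fract (((n + (j + 1) * m : ℕ) : ℝ) * α)
        = Int.fract (((n + j * m : ℕ) : ℝ) * α) + β := by
    intro j hj
    have hst := hstep j hj
    have hfc : ((⌊((n + (j + 1) * m : ℕ) : ℝ) * α⌋ : ℤ) : ℝ)
        = ((⌊((n + j * m : ℕ) : ℝ) * α⌋ : ℤ) : ℝ) + (c : ℝ) := by
      exact_mod_cast congrArg (Int.cast : ℤ → ℝ) (by omega : ⌊((n + (j + 1) * m : ℕ) : ℝ) * α⌋ = ⌊((n + j * m : ℕ) : ℝ) * α⌋ + c)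
    have hexp : ((n + (j + 1) * m : ℕ) : ℝ) * α = ((n + j * m : ℕ) : ℝ) * α + (m : ℝ) * α := by
      push_cast; ring
    simp only [Int.fract]
    rw [hfc, hβ, hexp]
    ring
  have hβirr : Irrational β := by
    have := (hirr.natCast_mul (m := m) hm.ne')
    simpa [hβ] using this.sub_intCast c
  have hβne : β ≠ 0 := fun e => hβirr.ne_int 0 (by simpa using e)
  have hx0 : ∀ j : ℕ, 0 ≤ Int.fract (((n + j * m : ℕ) : ℝ) * α) :=
    fun j => Int.fract_nonneg _
  have hx1 : ∀ j : ℕ, Int.fract (((n + j * m : ℕ) : ℝ) * α) < 1 :=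
    fun j => Int.fract_lt_one _
  have h01 := hxstep 0 (Nat.zero_le k)
  -- β ∈ (-1, 1)
  have hβlt : β < 1 := by have := hx1 1; have := hx0 0; linarith [h01]
  have hβgt : -1 < β := by have := hx0 1; have := hx1 0; linarith [h01]
  have hmirr : Irrational ((m : ℝ) * α) := hirr.natCast_mul hm.ne'
  have hfne : Int.fract ((m : ℝ) * α) ≠ 0 := by
    intro he
    have : (m : ℝ) * α = (⌊(m : ℝ) * α⌋ : ℝ) := by
      have := Int.fract_add_floor ((m : ℝ) * α); rw [he] at this; linarith
    exact hmirr.ne_int _ this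
  have htneg : Int.fract (-(m : ℝ) * α) = 1 - Int.fract ((m : ℝ) * α) := by
    rw [neg_mul, Int.fract_neg hfne]
  rcases lt_or_gt_of_ne hβne with hneg | hpos
  · -- β < 0 : all points are ≥ {-mα}
    right
    have hfloor : ⌊(m : ℝ) * α⌋ = c - 1 := by
      rw [Int.floor_eq_iff]
      constructor <;> (push_cast; linarith [hβ, hneg, hβgt])
    have hfract : Int.fract ((m : ℝ) * α) = β + 1 := by
      rw [Int.fract, hfloor]; push_cast; rw [hβ]; ring
    rw [htneg, hfract]
    intro j hj
    have := hxstep j hj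
    have := hx0 (j + 1)
    linarith
  · -- β > 0 : all points are < {-mα}
    left
    have hfloor : ⌊(m : ℝ) * α⌋ = c := by
      rw [Int.floor_eq_iff]
      constructor <;> (push_cast; linarith [hβ, hpos, hβlt])
    have hfract : Int.fract ((m : ℝ) * α) = β := by
      rw [Int.fract, hfloor, hβ]
    rw [htneg, hfract]
    intro j hj
    have := hxstep j hj
    have := hx1 (j + 1)
    linarith
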